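/- arXiv:1504.05906 — 2 statements merged into one kernel-verified Lean document; each statement's English description precedes it below -/
import Mathlib

section
/- Let 1 ≤ p ≤ q < ∞, let σ and w be weights (nonnegative locally integrable functions) on ℝⁿ, let 0 < α < n, and let D be a dyadic grid. Let M_α^D be the dyadic fractional maximal operator M_α^D f(x) = sup_{Q∈D, x∈Q} |Q|^{α/n} ⟨|f|⟩_Q. Suppose [σ,w] := sup_{Q∈D} σ(Q)^{1/p'} w(Q)^{1/q} |Q|^{α/n - 1} < ∞. Then for all f and all λ > 0, λ^q w({x : M_α^D(fσ)(x) > λ}) ≲ [σ,w]^q ‖f‖_{L^p(σ)}^q. -/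
open MeasureTheory Set ENNReal

noncomputable section

/-- An axis-parallel cube in `ℝⁿ`. -/
structure Cube (n : ℕ) where
  corner : Fin n → ℝ
  side : ℝ
  side_pos : 0 < side

namespace Cube

/-- The underlying (half-open) set of a cube. -/
def toSet {n : ℕ} (Q : Cube n) : Set (Fin n → ℝ) :=
  {x | ∀ i, Q.corner i ≤ x i ∧ x i < Q.corner i + Q.side}

/-- The volume `|Q| = side^n` of a cube. -/
def vol {n : ℕ} (Q : Cube n) : ℝ := Q.side ^ n

end Cube

/-- A dyadic grid: cubes of dyadic side lengths, nested or disjoint, partitioning `ℝⁿ`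
at every scale. -/
def IsDyadicGrid {n : ℕ} (D : Set (Cube n)) : Prop :=
  (∀ Q ∈ D, ∃ k : ℤ, Q.side = 2 ^ k) ∧
  (∀ Q ∈ D, ∀ R ∈ D, (Q.toSet ∩ R.toSet).Nonempty →
      Q.toSet ⊆ R.toSet ∨ R.toSet ⊆ Q.toSet) ∧
  (∀ k : ℤ, (⋃ Q ∈ {Q ∈ D | Q.side = 2 ^ k}, Q.toSet) = univ)

/-- The average `⟨f⟩_Q^μ = (1/μ(Q)) ∫_Q f dμ`. -/
def avg {n : ℕ} (μ : Measure (Fin n → ℝ)) (f : (Fin n → ℝ) → ℝ≥0∞) (Q : Cube n) : ℝ≥0∞ :=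
  (∫⁻ x in Q.toSet, f x ∂μ) / μ Q.toSet

/-- The Lebesgue average `⟨f⟩_Q = (1/|Q|) ∫_Q f`. -/
def lebAvg {n : ℕ} (f : (Fin n → ℝ) → ℝ≥0∞) (Q : Cube n) : ℝ≥0∞ :=
  (∫⁻ x in Q.toSet, f x) / ENNReal.ofReal Q.vol

/-- `σ(Q) = ∫_Q σ dx`. -/
def wt {n : ℕ} (σ : (Fin n → ℝ) → ℝ≥0∞) (Q : Cube n) : ℝ≥0∞ :=
  ∫⁻ x in Q.toSet, σ x

/-- The weighted average `⟨f⟩_Q^σ = (1/σ(Q)) ∫_Q f σ dx`. -/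
def avgw {n : ℕ} (σ f : (Fin n → ℝ) → ℝ≥0∞) (Q : Cube n) : ℝ≥0∞ :=
  (∫⁻ x in Q.toSet, f x * σ x) / wt σ Q

/-- The dyadic fractional maximal operator `M_α^D`. -/
def dyFracMax {n : ℕ} (D : Set (Cube n)) (α : ℝ) (f : (Fin n → ℝ) → ℝ≥0∞)
    (x : Fin n → ℝ) : ℝ≥0∞ :=
  ⨆ (Q : Cube n) (_ : Q ∈ D) (_ : x ∈ Q.toSet),
    ENNReal.ofReal (Q.vol ^ (α / (n : ℝ))) * lebAvg f Q

/-- The fractional maximal operator `M_α` (supremum over all cubes). -/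
def fracMax {n : ℕ} (α : ℝ) (f : (Fin n → ℝ) → ℝ≥0∞) (x : Fin n → ℝ) : ℝ≥0∞ :=
  ⨆ (Q : Cube n) (_ : x ∈ Q.toSet), ENNReal.ofReal (Q.vol ^ (α / (n : ℝ))) * lebAvg f Q

/-- The Hardy–Littlewood maximal operator (over all cubes). -/
def hlMax {n : ℕ} (f : (Fin n → ℝ) → ℝ≥0∞) (x : Fin n → ℝ) : ℝ≥0∞ :=
  ⨆ (Q : Cube n) (_ : x ∈ Q.toSet), lebAvg f Q

/-- The entropy functional `ρ_σ(Q) = (1/σ(Q)) ∫_Q M(σ 1_Q)`. -/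
def entropy {n : ℕ} (σ : (Fin n → ℝ) → ℝ≥0∞) (Q : Cube n) : ℝ≥0∞ :=
  (∫⁻ x in Q.toSet, hlMax (Q.toSet.indicator σ) x) / wt σ Q

/-- The fractional integral operator `I_α f (x) = ∫ f(y) |x-y|^{α-n} dy`. -/
def fracInt {n : ℕ} (α : ℝ) (f : (Fin n → ℝ) → ℝ≥0∞) (x : Fin n → ℝ) : ℝ≥0∞ :=
  ∫⁻ y, f y * ENNReal.ofReal (Real.sqrt (∑ i, (x i - y i) ^ 2) ^ (α - (n : ℝ)))

/-- `Q` is a maximal element of `S` strictly contained in `P`. -/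
def IsMaxChild {n : ℕ} (S : Set (Cube n)) (P Q : Cube n) : Prop :=
  Q ∈ S ∧ Q.toSet ⊂ P.toSet ∧
    ∀ R ∈ S, R.toSet ⊂ P.toSet → Q.toSet ⊆ R.toSet → R.toSet ⊆ Q.toSet

/-- A sparse collection of cubes: the maximal elements strictly inside any `P` in the
collection have total volume at most `|P|/2`. -/
def IsSparse {n : ℕ} (S : Set (Cube n)) : Prop :=
  ∀ P ∈ S, (∑' Q : {Q : Cube n // IsMaxChild S P Q}, ENNReal.ofReal Q.1.vol)
      ≤ ENNReal.ofReal P.vol / 2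

/-- `P` is the `S`-parent of `Q`: the minimal element of `S` containing `Q`. -/
def IsSParent {n : ℕ} (S : Set (Cube n)) (Q P : Cube n) : Prop :=
  P ∈ S ∧ Q.toSet ⊆ P.toSet ∧ ∀ R ∈ S, Q.toSet ⊆ R.toSet → P.toSet ⊆ R.toSet

/-- The separated-bump entropy functional
`ϱ_σ^{α,p,q}(Q) = σ(Q)^{-q/p} ∫_Q M_α(1_Q σ)^{q/p}`. -/
def sepRho {n : ℕ} (α p q : ℝ) (σ : (Fin n → ℝ) → ℝ≥0∞) (Q : Cube n) : ℝ≥0∞ :=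
  (∫⁻ x in Q.toSet, fracMax α (Q.toSet.indicator σ) x ^ (q / p)) / wt σ Q ^ (q / p)

/-- The separated entropy bump constant `[[σ,w]]_{α,p,q}` with bump function `ε`. -/
def sepBump {n : ℕ} (α p q : ℝ) (ε : ℝ → ℝ) (σ w : (Fin n → ℝ) → ℝ≥0∞) : ℝ≥0∞ :=
  ⨆ Q : Cube n,
    (ENNReal.ofReal (Q.vol ^ (α / (n : ℝ))) * lebAvg σ Q) ^ (q * (1 - 1 / p)) *
      lebAvg w Q * sepRho α p q σ Q * ENNReal.ofReal (ε (sepRho α p q σ Q).toReal)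

/-- The one-bump entropy quantity for the fractional maximal operator:
`β(Q) = |Q|^{α/n-1} σ(Q)^{1/p'} w(Q)^{1/q} ρ_σ(Q)^{1/p} ε_q(ρ_σ(Q))`. -/
def maxBump {n : ℕ} (α p q : ℝ) (εq : ℝ → ℝ) (σ w : (Fin n → ℝ) → ℝ≥0∞)
    (Q : Cube n) : ℝ≥0∞ :=
  ENNReal.ofReal (Q.vol ^ (α / (n : ℝ) - 1)) * wt σ Q ^ (1 - 1 / p) * wt w Q ^ (1 / q) *
    entropy σ Q ^ (1 / p) * ENNReal.ofReal (εq (entropy σ Q).toReal)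

/-- The one-bump entropy quantity for the fractional integral operator:
`β(Q) = |Q|^{α/n-1} σ(Q)^{1/p'} w(Q)^{1/q} ρ_σ(Q)^{1/p} ε_p(ρ_σ(Q)) ρ_w(Q)^{1/q'} ε_{q'}(ρ_w(Q))`. -/
def intBump {n : ℕ} (α p q : ℝ) (εp εq' : ℝ → ℝ) (σ w : (Fin n → ℝ) → ℝ≥0∞)
    (Q : Cube n) : ℝ≥0∞ :=
  ENNReal.ofReal (Q.vol ^ (α / (n : ℝ) - 1)) * wt σ Q ^ (1 - 1 / p) * wt w Q ^ (1 / q) *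
    entropy σ Q ^ (1 / p) * ENNReal.ofReal (εp (entropy σ Q).toReal) *
    entropy w Q ^ (1 - 1 / q) * ENNReal.ofReal (εq' (entropy w Q).toReal)

namespace Cube

variable {n : ℕ}

theorem ext' {Q R : Cube n} (hc : Q.corner = R.corner) (hs : Q.side = R.side) : Q = R := by
  cases Q; cases R; simp_all

theorem measurableSet_toSet (Q : Cube n) : MeasurableSet Q.toSet := by
  have h : Q.toSet = ⋂ i, (fun x : Fin n → ℝ => x i) ⁻¹'
      (Set.Ico (Q.corner i) (Q.corner i + Q.side)) := by
    ext x; simp [toSet, Set.mem_Ico]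
  rw [h]
  exact MeasurableSet.iInter fun i => (measurable_pi_apply i) measurableSet_Ico

theorem corner_mem (Q : Cube n) : Q.corner ∈ Q.toSet :=
  fun i => ⟨le_refl _, by linarith [Q.side_pos]⟩

theorem vol_pos (Q : Cube n) : 0 < Q.vol := pow_pos Q.side_pos n

theorem corner_le_of_subset {Q R : Cube n} (h : Q.toSet ⊆ R.toSet) (i : Fin n) :
    R.corner i ≤ Q.corner i ∧ Q.corner i + Q.side ≤ R.corner i + R.side := by
  have h1 := h Q.corner_mem
  refine ⟨(h1 i).1, ?_⟩
  by_contra hlt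
  push_neg at hlt
  set t := R.corner i + R.side - Q.corner i with ht
  have ht0 : 0 < t := by linarith [(h1 i).2]
  have hts : t < Q.side := by linarith
  have hy : Function.update Q.corner i (Q.corner i + t) ∈ Q.toSet := by
    intro j
    rcases eq_or_ne j i with hj | hj
    · subst hj; rw [Function.update_self]
      exact ⟨by linarith, by linarith⟩
    · rw [Function.update_of_ne hj]; exact Q.corner_mem j
  have h2 := (h hy) i
  rw [Function.update_self] at h2
  linarith [h2.2]

theorem side_le_of_subset (hn : 0 < n) {Q R : Cube n} (h : Q.toSet ⊆ R.toSet) :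
    Q.side ≤ R.side := by
  obtain ⟨h1, h2⟩ := corner_le_of_subset h ⟨0, hn⟩
  linarith

theorem eq_of_subset_of_side_eq {Q R : Cube n} (h : Q.toSet ⊆ R.toSet)
    (hs : Q.side = R.side) : Q = R := by
  refine ext' (funext fun i => ?_) hs
  obtain ⟨h1, h2⟩ := corner_le_of_subset h i
  have : Q.corner i ≤ R.corner i := by rw [hs] at h2; linarith
  linarith

theorem exists_rat_mem (Q : Cube n) : ∃ r : Fin n → ℚ, (fun i => (r i : ℝ)) ∈ Q.toSet := by
  have h : ∀ i, ∃ r : ℚ, Q.corner i < (r : ℝ) ∧ (r : ℝ) < Q.corner i + Q.side := fun i =>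
    exists_rat_btwn (by linarith [Q.side_pos])
  choose r hr using h
  exact ⟨r, fun i => ⟨(hr i).1.le, (hr i).2⟩⟩

end Cube

lemma tsum_rpow_le_rpow_tsum' {ι : Type*} (a : ι → ℝ≥0∞) {r : ℝ} (hr : 1 ≤ r) :
    ∑' i, a i ^ r ≤ (∑' i, a i) ^ r := by
  set S := ∑' i, a i with hS
  calc ∑' i, a i ^ r ≤ ∑' i, S ^ (r - 1) * a i := by
        refine ENNReal.tsum_le_tsum fun i => ?_
        have hi : a i ≤ S := ENNReal.le_tsum i
        calc a i ^ r = a i ^ (r - 1) * a i ^ (1 : ℝ) := by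
              rw [← ENNReal.rpow_add_of_nonneg _ _ (by linarith) zero_le_one]
              ring_nf
          _ ≤ S ^ (r - 1) * a i := by
              rw [ENNReal.rpow_one]
              exact mul_le_mul_left (ENNReal.rpow_le_rpow hi (by linarith)) _
    _ = S ^ (r - 1) * S := by rw [ENNReal.tsum_mul_left]
    _ = S ^ r := by
        have h2 : S ^ (r - 1 + 1) = S ^ (r - 1) * S ^ (1 : ℝ) :=
          ENNReal.rpow_add_of_nonneg _ _ (by linarith) zero_le_one
        rw [ENNReal.rpow_one] at h2
        rw [← h2, sub_add_cancel]

lemma holder_cube {n : ℕ} {p : ℝ} (hp : 1 ≤ p) {σ f : (Fin n → ℝ) → ℝ≥0∞}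
    (hσ : Measurable σ) (hf : Measurable f) (Q : Cube n) :
    (∫⁻ x in Q.toSet, f x * σ x) ≤
      (∫⁻ x in Q.toSet, f x ^ p * σ x) ^ (1/p) * (∫⁻ x in Q.toSet, σ x) ^ (1 - 1/p) := by
  rcases eq_or_lt_of_le hp with hp1 | hp1
  · simp only [← hp1]
    simp [ENNReal.rpow_one]
  · have hp0 : p ≠ 0 := by linarith
    set p' : ℝ := p / (p - 1) with hp'
    have hconj : p.HolderConjugate p' := Real.HolderConjugate.conjExponent hp1
    have hp'0 : p' ≠ 0 := ne_of_gt hconj.symm.pos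
    have key := ENNReal.lintegral_mul_le_Lp_mul_Lq (volume.restrict Q.toSet) hconj
      (f := fun x => f x * σ x ^ (1/p)) (g := fun x => σ x ^ (1/p'))
      (hf.mul (hσ.pow_const _)).aemeasurable (hσ.pow_const _).aemeasurable
    have hlhs : ∀ x, (fun x => f x * σ x ^ (1/p)) x * (fun x => σ x ^ (1/p')) x
        = f x * σ x := by
      intro x
      have : σ x ^ (1/p) * σ x ^ (1/p') = σ x := by
        rw [← ENNReal.rpow_add_of_nonneg _ _ (one_div_nonneg.mpr hconj.pos.le) (one_div_nonneg.mpr hconj.symm.pos.le)]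
        rw [one_div, one_div, hconj.inv_add_inv_eq_one, ENNReal.rpow_one]
      simp only [mul_assoc, this]
    have hf' : ∀ x, ((fun x => f x * σ x ^ (1/p)) x) ^ p = f x ^ p * σ x := by
      intro x
      rw [ENNReal.mul_rpow_of_nonneg _ _ (by positivity), ← ENNReal.rpow_mul,
        one_div_mul_cancel hp0, ENNReal.rpow_one]
    have hg' : ∀ x, ((fun x => σ x ^ (1/p')) x) ^ p' = σ x := by
      intro x
      rw [← ENNReal.rpow_mul, one_div_mul_cancel hp'0, ENNReal.rpow_one]
    have hexp : 1/p' = 1 - 1/p := by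
      have := hconj.inv_add_inv_eq_one
      rw [one_div, one_div]; linarith
    simp only [Pi.mul_apply] at key
    calc (∫⁻ x in Q.toSet, f x * σ x)
        = ∫⁻ x in Q.toSet, (f x * σ x ^ (1/p)) * (σ x ^ (1/p')) := by
          refine lintegral_congr fun x => ?_
          exact (hlhs x).symm
      _ ≤ (∫⁻ x in Q.toSet, (f x * σ x ^ (1/p)) ^ p) ^ (1/p) *
            (∫⁻ x in Q.toSet, (σ x ^ (1/p')) ^ p') ^ (1/p') := key
      _ = (∫⁻ x in Q.toSet, f x ^ p * σ x) ^ (1/p) * (∫⁻ x in Q.toSet, σ x) ^ (1 - 1/p) := by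
          rw [← hexp]
          congr 1
          · congr 1; exact lintegral_congr fun x => hf' x
          · congr 1; exact lintegral_congr fun x => hg' x



lemma per_cube {n : ℕ} {p q α : ℝ} (hp : 1 ≤ p) (hpq : p ≤ q)
    {σ w f : (Fin n → ℝ) → ℝ≥0∞} (hσ : Measurable σ) (hf : Measurable f)
    {A : ℝ≥0∞} {Q : Cube n}
    (hA : wt σ Q ^ (1 - 1/p) * wt w Q ^ (1/q) * ENNReal.ofReal (Q.vol ^ (α/(n:ℝ) - 1)) ≤ A)
    {lam : ℝ≥0∞}
    (hbad : lam < ENNReal.ofReal (Q.vol ^ (α/(n:ℝ))) * lebAvg (fun y => f y * σ y) Q) :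
    lam ^ q * wt w Q ≤ A ^ q * (∫⁻ x in Q.toSet, f x ^ p * σ x) ^ (q/p) := by
  have hq1 : 1 ≤ q := le_trans hp hpq
  have hq0 : (0:ℝ) ≤ q := by linarith
  have hqne : q ≠ 0 := by linarith
  have hv := Q.vol_pos
  set B := ENNReal.ofReal (Q.vol ^ (α/(n:ℝ) - 1)) with hB
  set J := ∫⁻ x in Q.toSet, f x ^ p * σ x with hJ
  set S := wt σ Q ^ (1 - 1/p) with hS
  have h1 : ENNReal.ofReal (Q.vol ^ (α/(n:ℝ))) * lebAvg (fun y => f y * σ y) Q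
      = B * ∫⁻ x in Q.toSet, f x * σ x := by
    have hBalt : B = ENNReal.ofReal (Q.vol ^ (α/(n:ℝ))) * (ENNReal.ofReal Q.vol)⁻¹ := by
      rw [hB]
      have : Q.vol ^ (α/(n:ℝ) - 1) = Q.vol ^ (α/(n:ℝ)) / Q.vol := by
        rw [Real.rpow_sub hv, Real.rpow_one]
      rw [this, ENNReal.ofReal_div_of_pos hv, div_eq_mul_inv]
    rw [hBalt]
    unfold lebAvg
    simp only [div_eq_mul_inv]
    ring
  rw [h1] at hbad
  have hhold := holder_cube hp hσ hf Q
  have hlam2 : lam ≤ B * (J ^ (1/p) * S) := by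
    exact le_trans hbad.le (mul_le_mul_right hhold B)
  have e1 : (J ^ (1/p)) ^ q = J ^ (q/p) := by
    rw [← ENNReal.rpow_mul]
    congr 1
    ring
  have e2 : (wt w Q ^ (1/q)) ^ q = wt w Q := by
    rw [← ENNReal.rpow_mul, one_div_mul_cancel hqne, ENNReal.rpow_one]
  calc lam ^ q * wt w Q
      ≤ (B * (J ^ (1/p) * S)) ^ q * wt w Q :=
        mul_le_mul_left (ENNReal.rpow_le_rpow hlam2 hq0) _
    _ = (S * wt w Q ^ (1/q) * B) ^ q * J ^ (q/p) := by
        simp only [ENNReal.mul_rpow_of_nonneg _ _ hq0]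
        rw [e1, e2]
        ring
    _ ≤ A ^ q * J ^ (q/p) :=
        mul_le_mul_left (ENNReal.rpow_le_rpow hA hq0) _

/-- the weak-type two-weight bound for the dyadic fractional maximal
operator under the joint `A_{p,q}`-type condition (Theorem 1.1 / Lemma 3.1). -/
theorem stmt2 (n : ℕ) (p q α : ℝ) (hp : 1 ≤ p) (hpq : p ≤ q) (hα : 0 < α) (hαn : α < n) :
    ∃ C : ℝ≥0∞, C ≠ ∞ ∧
    ∀ (σ w : (Fin n → ℝ) → ℝ≥0∞), Measurable σ → Measurable w →
      (∀ Q : Cube n, wt σ Q ≠ ∞) → (∀ Q : Cube n, wt w Q ≠ ∞) →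
    ∀ (D : Set (Cube n)), IsDyadicGrid D →
      (⨆ Q ∈ D, wt σ Q ^ (1 - 1/p) * wt w Q ^ (1/q) *
          ENNReal.ofReal (Q.vol ^ (α/(n:ℝ) - 1))) ≠ ∞ →
    ∀ f : (Fin n → ℝ) → ℝ≥0∞, Measurable f → ∀ lam : ℝ≥0∞, 0 < lam →
      lam ^ q * (∫⁻ x in {x | lam < dyFracMax D α (fun y => f y * σ y) x}, w x)
        ≤ C * (⨆ Q ∈ D, wt σ Q ^ (1 - 1/p) * wt w Q ^ (1/q) *
            ENNReal.ofReal (Q.vol ^ (α/(n:ℝ) - 1))) ^ q * (∫⁻ x, f x ^ p * σ x) ^ (q/p) := by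
  classical
  have hn : 0 < n := by
    have : (0:ℝ) < (n:ℝ) := lt_trans hα hαn
    exact_mod_cast this
  have hq1 : 1 ≤ q := le_trans hp hpq
  have hp0 : (0:ℝ) < p := by linarith
  have hqp1 : 1 ≤ q / p := (one_le_div hp0).mpr hpq
  have hqp0 : (0:ℝ) ≤ q / p := by linarith
  refine ⟨1, one_ne_top, ?_⟩
  intro σ w hσ hw hσfin hwfin D hD hAfin f hf lam hlam
  rw [one_mul]
  set g : (Fin n → ℝ) → ℝ≥0∞ := fun y => f y * σ y with hg
  set A := ⨆ Q ∈ D, wt σ Q ^ (1 - 1/p) * wt w Q ^ (1/q) *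
      ENNReal.ofReal (Q.vol ^ (α/(n:ℝ) - 1)) with hAdef
  have hA : ∀ Q ∈ D, wt σ Q ^ (1 - 1/p) * wt w Q ^ (1/q) *
      ENNReal.ofReal (Q.vol ^ (α/(n:ℝ) - 1)) ≤ A := fun Q hQ => by
    rw [hAdef]
    exact le_iSup₂ (f := fun (Q : Cube n) (_ : Q ∈ D) => wt σ Q ^ (1 - 1/p) * wt w Q ^ (1/q) * ENNReal.ofReal (Q.vol ^ (α/(n:ℝ) - 1))) Q hQ
  have hnest := hD.2.1
  set Bad : ℕ → Set (Cube n) := fun N =>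
    {Q | Q ∈ D ∧ Q.side ≤ (2:ℝ)^(N:ℤ) ∧
      lam < ENNReal.ofReal (Q.vol ^ (α/(n:ℝ))) * lebAvg g Q} with hBad
  set Mx : ℕ → Set (Cube n) := fun N =>
    {Q | Q ∈ Bad N ∧ ∀ R ∈ Bad N, Q.toSet ⊆ R.toSet → R = Q} with hMx
  -- existence of maximal cubes
  have hmax : ∀ N, ∀ Q ∈ Bad N, ∃ R ∈ Mx N, Q.toSet ⊆ R.toSet := by
    intro N Q hQ
    set S : Set (Cube n) := {R | R ∈ Bad N ∧ Q.toSet ⊆ R.toSet} with hSdef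
    have hSQ : Q ∈ S := ⟨hQ, subset_rfl⟩
    have hinj : Set.InjOn Cube.side S := by
      intro R1 h1 R2 h2 hside
      have hne : (R1.toSet ∩ R2.toSet).Nonempty :=
        ⟨Q.corner, h1.2 Q.corner_mem, h2.2 Q.corner_mem⟩
      rcases hnest R1 h1.1.1 R2 h2.1.1 hne with hsub | hsub
      · exact Cube.eq_of_subset_of_side_eq hsub hside
      · exact (Cube.eq_of_subset_of_side_eq hsub hside.symm).symm
    obtain ⟨kQ, hkQ⟩ := hD.1 Q hQ.1
    have himg : (Cube.side '' S).Finite := by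
      refine Set.Finite.subset ((Set.finite_Icc kQ (N:ℤ)).image fun k : ℤ => (2:ℝ)^k) ?_
      rintro _ ⟨R, hR, rfl⟩
      obtain ⟨kR, hkR⟩ := hD.1 R hR.1.1
      refine ⟨kR, ⟨?_, ?_⟩, hkR.symm⟩
      · rw [← zpow_le_zpow_iff_right₀ (one_lt_two : (1:ℝ) < 2), ← hkQ, ← hkR]
        exact Cube.side_le_of_subset hn hR.2
      · rw [← zpow_le_zpow_iff_right₀ (one_lt_two : (1:ℝ) < 2), ← hkR]
        exact hR.1.2.1
    have hSfin : S.Finite := Set.Finite.of_finite_image himg hinj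
    obtain ⟨R0, hR0S, hR0max⟩ := Set.Finite.exists_maximalFor Cube.side S hSfin ⟨Q, hSQ⟩
    refine ⟨R0, ⟨hR0S.1, ?_⟩, hR0S.2⟩
    intro R' hR' hsub
    have hR'S : R' ∈ S := ⟨hR', hR0S.2.trans hsub⟩
    have hside : R0.side = R'.side := le_antisymm (Cube.side_le_of_subset hn hsub) (hR0max hR'S (Cube.side_le_of_subset hn hsub))
    exact (Cube.eq_of_subset_of_side_eq hsub hside).symm
  -- maximal cubes are pairwise disjoint
  have hdisj : ∀ N, ∀ Q ∈ Mx N, ∀ R ∈ Mx N, Q ≠ R → Disjoint Q.toSet R.toSet := by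
    intro N Q hQ R hR hne
    rw [Set.disjoint_iff_inter_eq_empty]
    by_contra h
    have hnem : (Q.toSet ∩ R.toSet).Nonempty := Set.nonempty_iff_ne_empty.mpr h
    rcases hnest Q hQ.1.1 R hR.1.1 hnem with hsub | hsub
    · exact hne (hQ.2 R hR.1 hsub).symm
    · exact hne (hR.2 Q hQ.1 hsub)
  -- countability
  have hcnt : ∀ N, (Mx N).Countable := by
    intro N
    choose r hr using fun Q : Cube n => Cube.exists_rat_mem Q
    rw [← Set.countable_coe_iff]
    have hinj : Function.Injective (fun Q : Mx N => r Q.1) := by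
      intro Q1 Q2 he
      have hmem : (fun i => ((r Q1.1) i : ℝ)) ∈ Q1.1.toSet ∩ Q2.1.toSet := by
        refine ⟨hr Q1.1, ?_⟩
        have he' : r Q1.1 = r Q2.1 := he
        have := hr Q2.1
        rw [← he'] at this
        exact this
      refine Subtype.ext ?_
      by_contra hne
      have hempty := Set.disjoint_iff_inter_eq_empty.mp
        (hdisj N Q1.1 Q1.2 Q2.1 Q2.2 hne)
      rw [hempty] at hmem
      exact hmem
    exact hinj.countable
  -- the level set decomposition
  set E : ℕ → Set (Fin n → ℝ) := fun N => ⋃ Q ∈ Bad N, Q.toSet with hE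
  have hcover : ∀ N, E N = ⋃ Q ∈ Mx N, Q.toSet := by
    intro N
    apply Set.Subset.antisymm
    · intro x hx
      simp only [hE, Set.mem_iUnion] at hx ⊢
      obtain ⟨Q, hQ, hxQ⟩ := hx
      obtain ⟨R, hR, hQR⟩ := hmax N Q hQ
      exact ⟨R, hR, hQR hxQ⟩
    · refine Set.iUnion₂_subset fun Q hQ => ?_
      exact Set.subset_iUnion₂ (s := fun Q _ => Q.toSet) Q hQ.1
  have hEmeas : ∀ N, MeasurableSet (E N) := fun N => by
    rw [hcover N]
    exact MeasurableSet.biUnion (hcnt N) fun Q _ => Q.measurableSet_toSet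
  have hEmono : Monotone E := by
    intro N M hNM
    refine Set.iUnion₂_subset fun Q hQ => ?_
    have hQM : Q ∈ Bad M := by
      refine ⟨hQ.1, le_trans hQ.2.1 ?_, hQ.2.2⟩
      exact zpow_le_zpow_right₀ (one_le_two : (1:ℝ) ≤ 2) (by exact_mod_cast hNM)
    exact Set.subset_iUnion₂ (s := fun Q _ => Q.toSet) Q hQM
  have hsetEq : {x | lam < dyFracMax D α g x} = ⋃ N : ℕ, E N := by
    ext x
    simp only [Set.mem_setOf_eq, dyFracMax, lt_iSup_iff, Set.mem_iUnion, hE]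
    constructor
    · rintro ⟨Q, hQD, hxQ, hlt⟩
      obtain ⟨k, hk⟩ := hD.1 Q hQD
      refine ⟨k.toNat, Q, ⟨hQD, ?_, hlt⟩, hxQ⟩
      rw [hk]
      exact zpow_le_zpow_right₀ (one_le_two : (1:ℝ) ≤ 2) (Int.self_le_toNat k)
    · rintro ⟨N, Q, hQ, hxQ⟩
      exact ⟨Q, hQ.1, hxQ, hQ.2.2⟩
  -- measure bound
  set μ := volume.withDensity w with hμ
  have hLHS : (∫⁻ x in {x | lam < dyFracMax D α g x}, w x) = μ (⋃ N : ℕ, E N) := by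
    rw [hsetEq, hμ]
    exact (withDensity_apply w (MeasurableSet.iUnion hEmeas)).symm
  rw [hLHS, hEmono.measure_iUnion, ENNReal.mul_iSup]
  refine iSup_le fun N => ?_
  have step1 : μ (E N) ≤ ∑' Q : Mx N, wt w Q.1 := by
    rw [hcover N]
    refine le_trans (measure_biUnion_le μ (hcnt N) _) ?_
    refine le_of_eq (tsum_congr fun Q => ?_)
    rw [hμ, withDensity_apply w Q.1.measurableSet_toSet]
    rfl
  have hcntS : Countable (Mx N) := (hcnt N).to_subtype
  have hdisjS : Pairwise (Function.onFun Disjoint fun Q : Mx N => Q.1.toSet) := by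
    intro i j hij
    exact hdisj N i.1 i.2 j.1 j.2 fun h => hij (Subtype.ext h)
  have step3 : ∑' Q : Mx N, (∫⁻ x in Q.1.toSet, f x ^ p * σ x)
      ≤ ∫⁻ x, f x ^ p * σ x := by
    rw [← lintegral_iUnion (fun Q : Mx N => Q.1.measurableSet_toSet) hdisjS]
    exact setLIntegral_le_lintegral _ _
  calc lam ^ q * μ (E N) ≤ lam ^ q * ∑' Q : Mx N, wt w Q.1 :=
        mul_le_mul_right step1 _
    _ = ∑' Q : Mx N, lam ^ q * wt w Q.1 := ENNReal.tsum_mul_left.symm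
    _ ≤ ∑' Q : Mx N, A ^ q * (∫⁻ x in Q.1.toSet, f x ^ p * σ x) ^ (q/p) := by
        refine ENNReal.tsum_le_tsum fun Q => ?_
        exact per_cube hp hpq hσ hf (hA Q.1 Q.2.1.1) Q.2.1.2.2
    _ = A ^ q * ∑' Q : Mx N, (∫⁻ x in Q.1.toSet, f x ^ p * σ x) ^ (q/p) :=
        ENNReal.tsum_mul_left
    _ ≤ A ^ q * (∑' Q : Mx N, ∫⁻ x in Q.1.toSet, f x ^ p * σ x) ^ (q/p) :=
        mul_le_mul_right (tsum_rpow_le_rpow_tsum' _ hqp1) _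
    _ ≤ A ^ q * (∫⁻ x, f x ^ p * σ x) ^ (q/p) :=
        mul_le_mul_right (ENNReal.rpow_le_rpow step3 hqp0) _
end
end

section
/- Let D be a dyadic grid, Q₀ ∈ D, 0 < α < n, f ≥ 0, and S the stopping collection built by: Q₀ ∈ S and, recursively, for minimal P ∈ S add the maximal Q ⊊ P with ⟨f⟩_Q > 4⟨f⟩_P. For each Q ∈ D with Q ⊆ Q₀ let Q^S denote its S-parent (the minimal S ∈ S containing Q). Then for every x ∈ Q₀, ∑_{Q∈D: Q⊆Q₀} |Q|^{α/n} ⟨f⟩_Q 𝟙_Q(x) ≤ C(α,n) ∑_{S∈S} |S|^{α/n} ⟨f⟩_S 𝟙_S(x). -/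
open MeasureTheory Set ENNReal

noncomputable section

lemma Cube.ext'_s6 {n : ℕ} {Q P : Cube n} (h1 : Q.corner = P.corner) (h2 : Q.side = P.side) :
    Q = P := by
  cases Q; cases P; simp_all

lemma Cube.coord_subset {n : ℕ} {Q P : Cube n} (h : Q.toSet ⊆ P.toSet) (i : Fin n) :
    Set.Ico (Q.corner i) (Q.corner i + Q.side) ⊆ Set.Ico (P.corner i) (P.corner i + P.side) := by
  intro t ht
  have hx : (fun j => if j = i then t else Q.corner j) ∈ Q.toSet := by
    intro j
    by_cases hj : j = i
    · subst hj; simpa using ⟨ht.1, ht.2⟩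
    · simp [hj, Q.side_pos]
  have := h hx i
  simpa using this

lemma Cube.side_le {n : ℕ} (hn : 0 < n) {Q P : Cube n} (h : Q.toSet ⊆ P.toSet) :
    Q.side ≤ P.side := by
  have i : Fin n := ⟨0, hn⟩
  have h2 := Cube.coord_subset h i
  rw [Set.Ico_subset_Ico_iff (by linarith [Q.side_pos])] at h2
  linarith [h2.1, h2.2]

lemma Cube.eq_of_subset_side_eq {n : ℕ} (hn : 0 < n) {Q P : Cube n} (h : Q.toSet ⊆ P.toSet)
    (hs : Q.side = P.side) : Q = P := by
  refine Cube.ext'_s6 (funext fun i => ?_) hs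
  have h2 := Cube.coord_subset h i
  rw [Set.Ico_subset_Ico_iff (by linarith [Q.side_pos])] at h2
  have := h2.2
  rw [hs] at this
  linarith [h2.1]

lemma vol_rpow {n : ℕ} (hn : 0 < n) (Q : Cube n) (α : ℝ) :
    Q.vol ^ (α / (n : ℝ)) = Q.side ^ α := by
  rw [Cube.vol, ← Real.rpow_natCast Q.side n, ← Real.rpow_mul Q.side_pos.le]
  congr 1
  field_simp

lemma geom_sum_le (α : ℝ) (hα : 0 < α) (s : ℝ) (hs : 0 < s) :
    (∑' k : ℤ, (if (2:ℝ)^k ≤ s then ENNReal.ofReal (((2:ℝ)^k) ^ α) else 0))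
      ≤ (1 - ENNReal.ofReal ((2:ℝ) ^ (-α)))⁻¹ * ENNReal.ofReal (s ^ α) := by
  set g : ℤ → ℝ≥0∞ := fun k => if (2:ℝ)^k ≤ s then ENNReal.ofReal (((2:ℝ)^k) ^ α) else 0 with hg
  set k₀ : ℤ := ⌊Real.logb 2 s⌋ with hk₀
  have hcond : ∀ k : ℤ, (2:ℝ)^k ≤ s ↔ k ≤ k₀ := by
    intro k
    rw [hk₀, Int.le_floor, Real.le_logb_iff_rpow_le one_lt_two hs, Real.rpow_intCast]
  have h2k₀ : (2:ℝ)^k₀ ≤ s := (hcond k₀).2 le_rfl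
  have hsupp : Function.support g ⊆ {k : ℤ | k ≤ k₀} := by
    intro k hk
    simp only [hg, Function.mem_support, ne_eq, ite_eq_right_iff, not_forall] at hk
    exact (hcond k).1 hk.choose
  rw [← tsum_subtype_eq_of_support_subset hsupp]
  calc (∑' k : {k : ℤ | k ≤ k₀}, g k)
      ≤ ∑' j : ℕ, ENNReal.ofReal ((2:ℝ) ^ (-α)) ^ j * ENNReal.ofReal (s ^ α) := by
        apply ENNReal.summable.tsum_le_tsum_of_inj (fun k : {k : ℤ | k ≤ k₀} => (k₀ - k.1).toNat)
        · intro a b hab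
          have ha := a.2; have hb := b.2
          simp only [Set.mem_setOf_eq] at ha hb
          simp only at hab
          exact Subtype.ext (by omega)
        · intro c _; exact zero_le
        · rintro ⟨k, hk⟩
          simp only [Set.mem_setOf_eq] at hk
          by_cases h2 : (2:ℝ)^k ≤ s
          · simp only [hg, if_pos h2]
            rw [← ENNReal.ofReal_pow (by positivity), ← ENNReal.ofReal_mul (by positivity)]
            apply ENNReal.ofReal_le_ofReal
            have h0 : ((k₀ - k).toNat : ℤ) = k₀ - k := Int.toNat_of_nonneg (by omega)
            have hj : ((k₀ - k).toNat : ℝ) = ((k₀:ℝ) - k) := by exact_mod_cast h0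
            calc ((2:ℝ)^k) ^ α = (2:ℝ) ^ ((k:ℝ) * α) := by
                  rw [← Real.rpow_intCast (2:ℝ) k, ← Real.rpow_mul (by norm_num)]
              _ = ((2:ℝ) ^ (-α)) ^ ((k₀:ℝ) - k) * ((2:ℝ)^(k₀:ℤ)) ^ α := by
                  rw [← Real.rpow_intCast (2:ℝ) k₀,
                    ← Real.rpow_mul (by norm_num : (0:ℝ) ≤ 2),
                    ← Real.rpow_mul (by norm_num : (0:ℝ) ≤ 2),
                    ← Real.rpow_add two_pos]
                  congr 1; ring
              _ = ((2:ℝ) ^ (-α)) ^ ((k₀ - k).toNat : ℝ) * ((2:ℝ)^(k₀:ℤ)) ^ α := by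
                  rw [hj]
              _ ≤ ((2:ℝ) ^ (-α)) ^ ((k₀ - k).toNat : ℝ) * s ^ α := by
                  apply mul_le_mul_of_nonneg_left _ (by positivity)
                  exact Real.rpow_le_rpow (by positivity) h2k₀ hα.le
              _ = ((2:ℝ) ^ (-α)) ^ ((k₀ - k).toNat) * s ^ α := by
                  rw [Real.rpow_natCast]
          · simp only [hg, if_neg h2]; exact zero_le
        · exact ENNReal.summable
    _ = (1 - ENNReal.ofReal ((2:ℝ) ^ (-α)))⁻¹ * ENNReal.ofReal (s ^ α) := by
        rw [ENNReal.tsum_mul_right, ENNReal.tsum_geometric]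

/-- the dyadic fractional integral sum is pointwise dominated by the
sparse operator over the stopping family (the reduction (2.4)/(2.5) of Remark 2.6). -/
theorem stmt6 (n : ℕ) (α : ℝ) (hα : 0 < α) (hαn : α < n) :
    ∃ C : ℝ≥0∞, C ≠ ∞ ∧
    ∀ (D : Set (Cube n)), IsDyadicGrid D → ∀ Q₀ ∈ D,
    ∀ f : (Fin n → ℝ) → ℝ≥0∞,
    ∀ S : Set (Cube n), S ⊆ D → Q₀ ∈ S → (∀ P ∈ S, P.toSet ⊆ Q₀.toSet) →
      (∀ Q ∈ D, Q.toSet ⊆ Q₀.toSet →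
        ∃ P, IsSParent S Q P ∧ lebAvg f Q ≤ 4 * lebAvg f P) →
    ∀ x ∈ Q₀.toSet,
      (∑' Q : {Q : Cube n // Q ∈ D ∧ Q.toSet ⊆ Q₀.toSet},
          Q.1.toSet.indicator
            (fun _ => ENNReal.ofReal (Q.1.vol ^ (α/(n:ℝ))) * lebAvg f Q.1) x)
        ≤ C * ∑' P : S, P.1.toSet.indicator
            (fun _ => ENNReal.ofReal (P.1.vol ^ (α/(n:ℝ))) * lebAvg f P.1) x := by
  have hn : 0 < n := by
    have : (0:ℝ) < n := hα.trans hαn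
    exact_mod_cast this
  set r : ℝ≥0∞ := ENNReal.ofReal ((2:ℝ) ^ (-α)) with hr
  have hr1 : r < 1 := by
    rw [hr, ← ENNReal.ofReal_one]
    exact ENNReal.ofReal_lt_ofReal_iff_of_nonneg (by positivity) |>.2
      (Real.rpow_lt_one_of_one_lt_of_neg one_lt_two (by linarith))
  have hC : (4 * (1 - r)⁻¹ : ℝ≥0∞) ≠ ∞ := by
    apply ENNReal.mul_ne_top (by norm_num)
    rw [ENNReal.inv_ne_top]
    intro h
    exact absurd (tsub_eq_zero_iff_le.1 h) (not_le.2 hr1)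
  refine ⟨4 * (1 - r)⁻¹, hC, ?_⟩
  intro D hD Q₀ hQ₀ f S hSD hQ₀S hSsub hstop x hx
  have hstop' : ∀ Q : {Q : Cube n // Q ∈ D ∧ Q.toSet ⊆ Q₀.toSet},
      ∃ P, IsSParent S Q.1 P ∧ lebAvg f Q.1 ≤ 4 * lebAvg f P :=
    fun Q => hstop Q.1 Q.2.1 Q.2.2
  choose par hpar h4 using hstop'
  choose sc hsc using fun (Q : {Q : Cube n // Q ∈ D ∧ Q.toSet ⊆ Q₀.toSet}) =>
    hD.1 Q.1 Q.2.1
  set t : {Q : Cube n // Q ∈ D ∧ Q.toSet ⊆ Q₀.toSet} → ℝ≥0∞ := fun Q =>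
    Q.1.toSet.indicator (fun _ => ENNReal.ofReal (Q.1.vol ^ (α/(n:ℝ))) * lebAvg f Q.1) x
    with ht
  have hsupp : Function.support t ⊆ {Q : {Q : Cube n // Q ∈ D ∧ Q.toSet ⊆ Q₀.toSet} |
      x ∈ Q.1.toSet} := by
    intro Q hQ
    by_contra hQ'
    refine hQ ?_
    simp only [ht, Set.indicator_apply_eq_zero]
    intro hx'
    exact absurd hx' hQ'
  rw [← tsum_subtype_eq_of_support_subset hsupp]
  set h : ↥S × ℤ → ℝ≥0∞ := fun p =>
    if (2:ℝ)^p.2 ≤ p.1.1.side then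
      ENNReal.ofReal (((2:ℝ)^p.2) ^ α) *
        (4 * p.1.1.toSet.indicator (fun _ => lebAvg f p.1.1) x)
    else 0 with hh
  have key : (∑' Q : ↥{Q : {Q : Cube n // Q ∈ D ∧ Q.toSet ⊆ Q₀.toSet} | x ∈ Q.1.toSet},
      t Q.1) ≤ ∑' p : ↥S × ℤ, h p := by
    apply ENNReal.summable.tsum_le_tsum_of_inj
      (fun Q : ↥{Q : {Q : Cube n // Q ∈ D ∧ Q.toSet ⊆ Q₀.toSet} | x ∈ Q.1.toSet} =>
        ((⟨par Q.1, (hpar Q.1).1⟩ : ↥S), sc Q.1))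
    · intro a b hab
      simp only [Prod.mk.injEq, Subtype.mk.injEq] at hab
      have hsides : a.1.1.side = b.1.1.side := by rw [hsc a.1, hsc b.1, hab.2]
      have hnest := hD.2.1 a.1.1 a.1.2.1 b.1.1 b.1.2.1 ⟨x, a.2, b.2⟩
      have : a.1.1 = b.1.1 := by
        rcases hnest with hsub | hsub
        · exact Cube.eq_of_subset_side_eq hn hsub hsides
        · exact (Cube.eq_of_subset_side_eq hn hsub hsides.symm).symm
      exact Subtype.ext (Subtype.ext this)
    · intro c _; exact zero_le
    · intro Q
      have hxQ : x ∈ Q.1.1.toSet := Q.2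
      have hsub : Q.1.1.toSet ⊆ (par Q.1).toSet := (hpar Q.1).2.1
      have hside : (2:ℝ)^(sc Q.1) ≤ (par Q.1).side := by
        rw [← hsc Q.1]; exact Cube.side_le hn hsub
      simp only [hh, if_pos hside]
      rw [ht]
      simp only [Set.indicator_of_mem hxQ, Set.indicator_of_mem (hsub hxQ)]
      rw [vol_rpow hn, hsc Q.1]
      exact mul_le_mul_right (h4 Q.1) _
    · exact ENNReal.summable
  refine key.trans ?_
  rw [ENNReal.tsum_prod (f := fun a b => h (a, b))]
  have hPk : ∀ P : ↥S, (∑' k : ℤ, h (P, k)) ≤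
      (4 * (1 - r)⁻¹) * (P.1.toSet.indicator
        (fun _ => ENNReal.ofReal (P.1.vol ^ (α/(n:ℝ))) * lebAvg f P.1) x) := by
    intro P
    have hps : 0 < P.1.side := P.1.side_pos
    have h1 : (∑' k : ℤ, h (P, k)) =
        (∑' k : ℤ, (if (2:ℝ)^k ≤ P.1.side then ENNReal.ofReal (((2:ℝ)^k) ^ α) else 0)) *
          (4 * P.1.toSet.indicator (fun _ => lebAvg f P.1) x) := by
      rw [← ENNReal.tsum_mul_right]
      congr 1; funext k
      simp only [hh, ite_mul, zero_mul]
    rw [h1]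
    calc _ ≤ ((1 - r)⁻¹ * ENNReal.ofReal (P.1.side ^ α)) *
          (4 * P.1.toSet.indicator (fun _ => lebAvg f P.1) x) :=
        mul_le_mul_left (geom_sum_le α hα P.1.side hps) _
      _ = (4 * (1 - r)⁻¹) * (ENNReal.ofReal (P.1.side ^ α) *
          P.1.toSet.indicator (fun _ => lebAvg f P.1) x) := by ring
      _ = _ := by
        congr 1
        by_cases hxP : x ∈ P.1.toSet
        · simp [Set.indicator_of_mem hxP, vol_rpow hn]
        · simp [Set.indicator_of_notMem hxP]
  calc (∑' P : ↥S, ∑' k : ℤ, h (P, k))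
      ≤ ∑' P : ↥S, (4 * (1 - r)⁻¹) * (P.1.toSet.indicator
          (fun _ => ENNReal.ofReal (P.1.vol ^ (α/(n:ℝ))) * lebAvg f P.1) x) :=
        ENNReal.tsum_le_tsum hPk
    _ = _ := ENNReal.tsum_mul_left
end
end
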